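/- arXiv:1906.10053 — 4 statements merged into one kernel-verified Lean document; each statement's English description precedes it below -/
import Mathlib

section
/- If G is convex and each f_i is μ_{f_i}-strongly convex, then for every x∈ℝ^{n_1}×⋯×ℝ^{n_N}, with z=T(x), one has φ_Γ(x) − min Φ ≤ ½ ∑_{i=1}^N ((N − γ_i μ_{f_i})/(γ_i² μ_{f_i})) ‖z_i − x_i‖², i.e., φ_Γ(x) − min Φ ≤ ½‖z − x‖²_{Γ^{-2}μ_F^{-1}(I − Γμ_F)} with μ_F=(1/N)·blockdiag(μ_{f_1}I_{n_1},…,μ_{f_N}I_{n_N}). -/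
open Filter Topology Metric Bornology Set
open scoped RealInnerProductSpace

noncomputable section

variable {N : ℕ} {E : Fin N → Type*}
  [∀ i, NormedAddCommGroup (E i)] [∀ i, InnerProductSpace ℝ (E i)]
  [∀ i, CompleteSpace (E i)]

/-- `F(x) = (1/N) ∑ᵢ fᵢ(xᵢ)`, the smooth separable part of the cost. -/
def Fsum (f : ∀ i, E i → ℝ) (x : PiLp 2 E) : ℝ := (N : ℝ)⁻¹ * ∑ i, f i (x i)

/-- `Φ = F + G`, the total cost, extended-real-valued. -/
def Phi (f : ∀ i, E i → ℝ) (G : PiLp 2 E → EReal) (x : PiLp 2 E) : EReal :=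
  ((Fsum f x : ℝ) : EReal) + G x

/-- The model `M(w,x) = F(x) + ⟨∇F(x),w-x⟩ + G(w) + ½‖w-x‖²_{Γ⁻¹}`, where `∇F(x)ᵢ = f'ᵢ(xᵢ)/N`
and `Γ = blockdiag(γ₁ I, …, γ_N I)`. -/
def Mdl (f : ∀ i, E i → ℝ) (f' : ∀ i, E i → E i) (γ : Fin N → ℝ)
    (G : PiLp 2 E → EReal) (w x : PiLp 2 E) : EReal :=
  ((Fsum f x + (N : ℝ)⁻¹ * ∑ i, ⟪f' i (x i), w i - x i⟫
      + 2⁻¹ * ∑ i, (γ i)⁻¹ * ‖w i - x i‖ ^ 2 : ℝ) : EReal) + G w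

/-- The forward-backward operator `T(x) = argmin_w M(w,x)`. -/
def Tmap (f : ∀ i, E i → ℝ) (f' : ∀ i, E i → E i) (γ : Fin N → ℝ)
    (G : PiLp 2 E → EReal) (x : PiLp 2 E) : Set (PiLp 2 E) :=
  {z | ∀ w, Mdl f f' γ G z x ≤ Mdl f f' γ G w x}

/-- The `Γ⁻¹`-proximal mapping
`prox_G^{Γ⁻¹}(u) = argmin_w { G(w) + ½‖w-u‖²_{Γ⁻¹} }`. -/
def proxSet (γ : Fin N → ℝ) (G : PiLp 2 E → EReal) (u : PiLp 2 E) : Set (PiLp 2 E) :=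
  {z | ∀ w, G z + ((2⁻¹ * ∑ i, (γ i)⁻¹ * ‖z i - u i‖ ^ 2 : ℝ) : EReal)
        ≤ G w + ((2⁻¹ * ∑ i, (γ i)⁻¹ * ‖w i - u i‖ ^ 2 : ℝ) : EReal)}

/-- The forward (gradient) step `x - Γ∇F(x)`. -/
def fwd (f' : ∀ i, E i → E i) (γ : Fin N → ℝ) (x : PiLp 2 E) : PiLp 2 E :=
  WithLp.toLp 2 (fun i => x i - (γ i * (N : ℝ)⁻¹) • f' i (x i))

/-- Convexity for an extended-real-valued function. -/
def ERealConvex {X : Type*} [AddCommMonoid X] [Module ℝ X] (G : X → EReal) : Prop :=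
  ∀ x y : X, ∀ a b : ℝ, 0 ≤ a → 0 ≤ b → a + b = 1 →
    G (a • x + b • y) ≤ (a : ℝ) * G x + (b : ℝ) * G y

/-- The regular (Fréchet) subdifferential `∂̂h(x)` of an extended-real-valued function. -/
def frechetSubdiff {X : Type*} [NormedAddCommGroup X] [InnerProductSpace ℝ X]
    (h : X → EReal) (x : X) : Set X :=
  {v | h x ≠ ⊤ ∧ h x ≠ ⊥ ∧ ∀ ε : ℝ, 0 < ε →
      ∀ᶠ w in 𝓝 x, h x + ((⟪v, w - x⟫ - ε * ‖w - x‖ : ℝ) : EReal) ≤ h w}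

/-- The limiting subdifferential `∂h(x)`. -/
def limitingSubdiff {X : Type*} [NormedAddCommGroup X] [InnerProductSpace ℝ X]
    (h : X → EReal) (x : X) : Set X :=
  {v | ∃ u w : ℕ → X, (∀ k, w k ∈ frechetSubdiff h (u k)) ∧
      Tendsto u atTop (𝓝 x) ∧ Tendsto (fun k => h (u k)) atTop (𝓝 (h x)) ∧
      Tendsto w atTop (𝓝 v)}

/-- The Kurdyka-Łojasiewicz property with exponent `θ` (at every point of `dom ∂h`),
with desingularizing function `ψ(s) = ϱ s^{1-θ}`. -/
def HasKLExponent {X : Type*} [NormedAddCommGroup X] [InnerProductSpace ℝ X]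
    (h : X → EReal) (θ : ℝ) : Prop :=
  ∀ xb : X, (limitingSubdiff h xb).Nonempty →
    ∃ ε η ϱ : ℝ, 0 < ε ∧ 0 < η ∧ 0 < ϱ ∧
      ∀ w : X, ‖w - xb‖ < ε → h xb < h w → h w < h xb + ((η : ℝ) : EReal) →
        ∀ v ∈ limitingSubdiff h w,
          1 ≤ ϱ * (1 - θ) * (h w - h xb).toReal ^ (-θ) * ‖v‖

section Helpers
variable {F : Type*} [NormedAddCommGroup F] [InnerProductSpace ℝ F] [CompleteSpace F]

/-- First-order condition for strong convexity. -/
lemma sc_first_order {f : F → ℝ} {g : F} {μ : ℝ} (x v : F)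
    (hf : HasGradientAt f g x) (hsc : StrongConvexOn Set.univ μ f) :
    f x + ⟪g, v - x⟫ + μ / 2 * ‖v - x‖ ^ 2 ≤ f v := by
  set d := v - x with hd
  have hdir : HasDerivAt (fun t : ℝ => f (x + t • d)) ⟪g, d⟫ 0 := by
    have hc : HasDerivAt (fun t : ℝ => x + t • d) d 0 := by
      simpa using ((hasDerivAt_id (0 : ℝ)).smul_const d).const_add x
    have hg : HasFDerivAt f (InnerProductSpace.toDual ℝ F g) (x + (0 : ℝ) • d) := by
      simpa using hf.hasFDerivAt
    have h := hg.comp_hasDerivAt 0 hc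
    simp only [InnerProductSpace.toDual_apply_apply] at h
    exact h
  have h1 : Tendsto (slope (fun t : ℝ => f (x + t • d)) 0) (𝓝[>] 0) (𝓝 ⟪g, d⟫) :=
    (hasDerivAt_iff_tendsto_slope.mp hdir).mono_left
      (nhdsWithin_mono _ fun t ht => ne_of_gt ht)
  have h2 : Tendsto (fun t : ℝ => f v - f x - (1 - t) * (μ / 2 * ‖d‖ ^ 2)) (𝓝[>] 0)
      (𝓝 (f v - f x - μ / 2 * ‖d‖ ^ 2)) := by
    have hcont : Continuous fun t : ℝ => f v - f x - (1 - t) * (μ / 2 * ‖d‖ ^ 2) := by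
      continuity
    have := (hcont.tendsto 0).mono_left (nhdsWithin_le_nhds (s := Ioi (0:ℝ)))
    simpa using this
  have hev : ∀ᶠ t in 𝓝[>] (0 : ℝ), slope (fun t : ℝ => f (x + t • d)) 0 t
      ≤ f v - f x - (1 - t) * (μ / 2 * ‖d‖ ^ 2) := by
    filter_upwards [Ioo_mem_nhdsGT_of_mem (by norm_num : (0 : ℝ) ∈ Ico (0:ℝ) 1)] with t ht
    have h01 : (0 : ℝ) ≤ 1 - t := by linarith [ht.2]
    have hcomb := hsc.2 (mem_univ x) (mem_univ v) h01 (le_of_lt ht.1) (by ring)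
    have hx : (1 - t) • x + t • v = x + t • d := by rw [hd]; module
    rw [hx] at hcomb
    have hnd : ‖x - v‖ = ‖d‖ := by rw [hd, norm_sub_rev]
    rw [hnd, smul_eq_mul, smul_eq_mul] at hcomb
    have hs : slope (fun t : ℝ => f (x + t • d)) 0 t = (f (x + t • d) - f x) / t := by
      simp [slope_def_field]
    rw [hs, div_le_iff₀ ht.1]
    nlinarith [hcomb]
  have hle := le_of_tendsto_of_tendsto h1 h2 hev
  linarith [hle]

lemma norm_combo_sq (t : ℝ) (p q : F) :
    ‖(1 - t) • p + t • q‖ ^ 2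
      = (1 - t) * ‖p‖ ^ 2 + t * ‖q‖ ^ 2 - t * (1 - t) * ‖p - q‖ ^ 2 := by
  have h1 : ‖(1 - t) • p + t • q‖ ^ 2
      = (1-t)*(1-t)*‖p‖^2 + 2*((1-t)*t*⟪p,q⟫) + t*t*‖q‖^2 := by
    rw [← real_inner_self_eq_norm_sq, real_inner_add_add_self, real_inner_smul_left,
      real_inner_smul_left, real_inner_smul_left, real_inner_smul_right,
      real_inner_smul_right, real_inner_smul_right, real_inner_self_eq_norm_sq,
      real_inner_self_eq_norm_sq]
    ring
  have h2 : ‖p - q‖ ^ 2 = ‖p‖ ^ 2 - 2 * ⟪p, q⟫ + ‖q‖ ^ 2 := by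
    rw [← real_inner_self_eq_norm_sq, real_inner_sub_sub_self, real_inner_self_eq_norm_sq,
      real_inner_self_eq_norm_sq]
  rw [h1, h2]; ring

lemma quad_bound {a b : ℝ} (hab : a < b) (p q : F) :
    2⁻¹ * a * ‖p‖ ^ 2 - 2⁻¹ * b * ‖q‖ ^ 2 ≤ a * b / (2 * (b - a)) * ‖q - p‖ ^ 2 := by
  have h0 : (0:ℝ) ≤ ‖a • p - b • q‖ ^ 2 := sq_nonneg _
  have e1 : ‖a • p - b • q‖ ^ 2 = a*a*‖p‖^2 - 2*(a*b*⟪p,q⟫) + b*b*‖q‖^2 := by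
    rw [← real_inner_self_eq_norm_sq, real_inner_sub_sub_self, real_inner_smul_left,
      real_inner_smul_left, real_inner_smul_left, real_inner_smul_right,
      real_inner_smul_right, real_inner_smul_right, real_inner_self_eq_norm_sq,
      real_inner_self_eq_norm_sq]
    ring
  have e2 : ‖q - p‖ ^ 2 = ‖q‖ ^ 2 - 2 * ⟪p, q⟫ + ‖p‖ ^ 2 := by
    rw [← real_inner_self_eq_norm_sq, real_inner_sub_sub_self, real_inner_self_eq_norm_sq,
      real_inner_self_eq_norm_sq, real_inner_comm]
  rw [e2, div_mul_eq_mul_div, le_div_iff₀ (by linarith : (0:ℝ) < 2 * (b - a))]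
  nlinarith [h0, e1]

lemma ereal_add_eq_real {x : EReal} {a c : ℝ} (hx : x ≠ ⊥)
    (h : (c : ℝ) + x = ((a : ℝ) : EReal)) : x = ((a - c : ℝ) : EReal) := by
  induction x using EReal.rec with
  | bot => exact absurd rfl hx
  | coe r =>
    rw [← EReal.coe_add, EReal.coe_eq_coe_iff] at h
    rw [EReal.coe_eq_coe_iff]; linarith
  | top => simp at h

end Helpers

set_option maxHeartbeats 1000000 in
/-- inequality (3.6): with G convex and fᵢ μ_{f_i}-strongly convex,
φ_Γ(x) - min Φ ≤ ½ ∑ᵢ ((N-γᵢμᵢ)/(γᵢ²μᵢ)) ‖zᵢ-xᵢ‖² for z = T(x). -/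
theorem fbe_strongly_convex_upper_bound
    (f : ∀ i, E i → ℝ) (f' : ∀ i, E i → E i) (L γ : Fin N → ℝ)
    (G : PiLp 2 E → EReal)
    (hf : ∀ i (u : E i), HasGradientAt (f i) (f' i u) u)
    (hL : ∀ i, 0 ≤ L i)
    (hlip : ∀ i (u v : E i), ‖f' i u - f' i v‖ ≤ L i * ‖u - v‖)
    (hγ : ∀ i, 0 < γ i) (hγL : ∀ i, γ i * L i < (N : ℝ))
    (hGlsc : LowerSemicontinuous G)
    (hGproper : ∃ w, G w ≠ ⊤) (hGbot : ∀ w, G w ≠ ⊥)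
    (hargmin : ∃ xs : PiLp 2 E, ∀ w, Phi f G xs ≤ Phi f G w)
    (φ : PiLp 2 E → ℝ)
    (hφ : ∀ x, ((φ x : ℝ) : EReal) = ⨅ w, Mdl f f' γ G w x)
    (μ : Fin N → ℝ) (hμ : ∀ i, 0 < μ i)
    (hsc : ∀ i, StrongConvexOn Set.univ (μ i) (f i))
    (hGconv : ERealConvex G)
    (xs : PiLp 2 E) (hxs : ∀ w, Phi f G xs ≤ Phi f G w)
    (m : ℝ) (hm : ((m : ℝ) : EReal) = Phi f G xs)
    (x z : PiLp 2 E) (hz : z ∈ Tmap f f' γ G x) :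
    φ x - m ≤ 2⁻¹ * ∑ i, (((N : ℝ) - γ i * μ i) / (γ i ^ 2 * μ i)) * ‖z i - x i‖ ^ 2 := by
  classical
  obtain ⟨cR, hcRdef⟩ : ∃ g : PiLp 2 E → ℝ, ∀ w, g w =
      Fsum f x + (N : ℝ)⁻¹ * ∑ i, ⟪f' i (x i), w i - x i⟫
        + 2⁻¹ * ∑ i, (γ i)⁻¹ * ‖w i - x i‖ ^ 2 := ⟨_, fun w => rfl⟩
  have hM : ∀ w, Mdl f f' γ G w x = ((cR w : ℝ) : EReal) + G w := by
    intro w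
    simp only [Mdl]
    rw [hcRdef w]
  have hMz : Mdl f f' γ G z x = ((φ x : ℝ) : EReal) := by
    rw [hφ x]
    exact le_antisymm (le_iInf fun w => hz w) (iInf_le _ z)
  obtain ⟨gz, hgz⟩ : ∃ g : ℝ, g = φ x - cR z := ⟨_, rfl⟩
  have hGz : G z = ((gz : ℝ) : EReal) := by
    rw [hgz]
    apply ereal_add_eq_real (hGbot z)
    rw [← hM z, hMz]
  have hφz : φ x = cR z + gz := by rw [hgz]; ring
  obtain ⟨gxs, hgxs⟩ : ∃ g : ℝ, g = m - Fsum f xs := ⟨_, rfl⟩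
  have hGxs : G xs = ((gxs : ℝ) : EReal) := by
    rw [hgxs]
    apply ereal_add_eq_real (hGbot xs)
    have h := hm.symm
    simp only [Phi] at h
    exact h
  obtain ⟨Q, hQdef⟩ : ∃ q : ℝ, q = ∑ i, (γ i)⁻¹ * ‖z i - xs i‖ ^ 2 := ⟨_, rfl⟩
  have hQ0 : 0 ≤ Q := hQdef ▸ Finset.sum_nonneg fun i _ =>
    mul_nonneg (inv_nonneg.2 (le_of_lt (hγ i))) (sq_nonneg _)
  have step3 : ∀ t : ℝ, t ∈ Set.Ioo (0:ℝ) 1 →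
      cR z + gz ≤ cR xs + gxs - 2⁻¹ * (1 - t) * Q := by
    intro t ht
    set wt : PiLp 2 E := (1 - t) • z + t • xs with hwt
    have hwti : ∀ i, wt i - x i = (1 - t) • (z i - x i) + t • (xs i - x i) := by
      intro i
      have h1 : wt i = (1 - t) • z i + t • xs i := rfl
      rw [h1]; module
    have hGwt : G wt ≤ (((1 - t) * gz + t * gxs : ℝ) : EReal) := by
      have h := hGconv z xs (1 - t) t (by linarith [ht.2]) (le_of_lt ht.1) (by ring)
      rw [hGz, hGxs] at h
      exact h.trans_eq (by rw [← EReal.coe_mul, ← EReal.coe_mul, ← EReal.coe_add])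
    have hmin := hz wt
    rw [hM z, hM wt, hGz] at hmin
    have hmin2 : ((cR z + gz : ℝ) : EReal) ≤ ((cR wt + ((1-t)*gz + t*gxs) : ℝ) : EReal) :=
      calc ((cR z + gz : ℝ) : EReal) = ((cR z : ℝ) : EReal) + ((gz : ℝ) : EReal) := by
            rw [EReal.coe_add]
        _ ≤ ((cR wt : ℝ) : EReal) + G wt := hmin
        _ ≤ ((cR wt : ℝ) : EReal) + (((1-t)*gz + t*gxs : ℝ) : EReal) := add_le_add_right hGwt _
        _ = _ := by rw [← EReal.coe_add]
    have hreal : cR z + gz ≤ cR wt + ((1-t)*gz + t*gxs) := EReal.coe_le_coe_iff.mp hmin2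
    have hs1 : ∑ i, ⟪f' i (x i), wt i - x i⟫
        = (1-t) * ∑ i, ⟪f' i (x i), z i - x i⟫ + t * ∑ i, ⟪f' i (x i), xs i - x i⟫ := by
      rw [Finset.mul_sum, Finset.mul_sum, ← Finset.sum_add_distrib]
      refine Finset.sum_congr rfl fun i _ => ?_
      rw [hwti i, inner_add_right, real_inner_smul_right, real_inner_smul_right]
    have hs2 : ∑ i, (γ i)⁻¹ * ‖wt i - x i‖ ^ 2
        = (1-t) * ∑ i, (γ i)⁻¹ * ‖z i - x i‖ ^ 2 + t * ∑ i, (γ i)⁻¹ * ‖xs i - x i‖ ^ 2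
          - t * (1-t) * Q := by
      rw [hQdef, Finset.mul_sum, Finset.mul_sum, Finset.mul_sum, ← Finset.sum_add_distrib,
        ← Finset.sum_sub_distrib]
      refine Finset.sum_congr rfl fun i _ => ?_
      rw [hwti i, norm_combo_sq]
      have hd : z i - x i - (xs i - x i) = z i - xs i := by abel
      rw [hd]; ring
    have hcwt : cR wt = (1-t) * cR z + t * cR xs - 2⁻¹ * (t * (1-t)) * Q := by
      rw [hcRdef wt, hcRdef z, hcRdef xs, hs1, hs2]
      ring
    rw [hcwt] at hreal
    have h' : t * (cR z + gz) ≤ t * (cR xs + gxs - 2⁻¹*(1-t)*Q) := by nlinarith [hreal]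
    exact le_of_mul_le_mul_left h' ht.1
  have step4 : cR z + gz ≤ cR xs + gxs - 2⁻¹ * Q := by
    refine le_of_forall_pos_le_add fun ε hε => ?_
    set t : ℝ := min 2⁻¹ (ε / (Q + 1)) with htdef
    have ht0 : 0 < t := lt_min (by norm_num) (div_pos hε (by linarith))
    have ht1 : t < 1 := lt_of_le_of_lt (min_le_left _ _) (by norm_num)
    have h3 := step3 t ⟨ht0, ht1⟩
    have htQ : t * Q ≤ ε := by
      calc t * Q ≤ (ε / (Q+1)) * Q := mul_le_mul_of_nonneg_right (min_le_right _ _) hQ0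
        _ ≤ ε := by
          rw [div_mul_eq_mul_div, div_le_iff₀ (by linarith : (0:ℝ) < Q+1)]
          nlinarith
    linarith
  obtain ⟨A, hA⟩ : ∃ a : ℝ, a = ∑ i, f i (x i) := ⟨_, rfl⟩
  obtain ⟨B, hB⟩ : ∃ a : ℝ, a = ∑ i, ⟪f' i (x i), xs i - x i⟫ := ⟨_, rfl⟩
  obtain ⟨C, hC⟩ : ∃ a : ℝ, a = ∑ i, μ i / 2 * ‖xs i - x i‖ ^ 2 := ⟨_, rfl⟩
  obtain ⟨D, hD⟩ : ∃ a : ℝ, a = ∑ i, f i (xs i) := ⟨_, rfl⟩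
  obtain ⟨Eγ, hE⟩ : ∃ a : ℝ, a = ∑ i, (γ i)⁻¹ * ‖xs i - x i‖ ^ 2 := ⟨_, rfl⟩
  have hsum5 : ∑ i, (f i (x i) + ⟪f' i (x i), xs i - x i⟫ + μ i / 2 * ‖xs i - x i‖ ^ 2)
      ≤ ∑ i, f i (xs i) :=
    Finset.sum_le_sum fun i _ => sc_first_order (x i) (xs i) (hf i (x i)) (hsc i)
  have hABC : ∑ i, (f i (x i) + ⟪f' i (x i), xs i - x i⟫ + μ i / 2 * ‖xs i - x i‖ ^ 2)
      = A + B + C := by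
    rw [hA, hB, hC, ← Finset.sum_add_distrib, ← Finset.sum_add_distrib]
  have hNsum : (N : ℝ)⁻¹ * (A + B + C) ≤ (N : ℝ)⁻¹ * D := by
    rw [← hABC, hD]
    exact mul_le_mul_of_nonneg_left hsum5 (inv_nonneg.2 (Nat.cast_nonneg N))
  obtain ⟨S1, hS1⟩ : ∃ a : ℝ, a = ∑ i, 2⁻¹ * ((γ i)⁻¹ - μ i / N) * ‖xs i - x i‖ ^ 2 := ⟨_, rfl⟩
  obtain ⟨S2, hS2⟩ : ∃ a : ℝ, a = ∑ i, 2⁻¹ * (γ i)⁻¹ * ‖xs i - z i‖ ^ 2 := ⟨_, rfl⟩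
  have hS1eq : S1 = 2⁻¹ * Eγ - (N : ℝ)⁻¹ * C := by
    rw [hS1, hE, hC, Finset.mul_sum, Finset.mul_sum, ← Finset.sum_sub_distrib]
    refine Finset.sum_congr rfl fun i _ => ?_
    have hN : (0:ℝ) < N := Nat.cast_pos.mpr i.pos
    field_simp
  have hQ2 : 2⁻¹ * Q = S2 := by
    rw [hQdef, hS2, Finset.mul_sum]
    refine Finset.sum_congr rfl fun i _ => ?_
    rw [norm_sub_rev (z i)]
    ring
  have hcRxs : cR xs = (N : ℝ)⁻¹ * A + (N : ℝ)⁻¹ * B + 2⁻¹ * Eγ := by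
    rw [hcRdef xs, Fsum, hA, hB, hE]
  have hFxs : Fsum f xs = (N : ℝ)⁻¹ * D := by rw [Fsum, hD]
  have step6 : ∀ i : Fin N, 2⁻¹ * ((γ i)⁻¹ - μ i / N) * ‖xs i - x i‖ ^ 2
      - 2⁻¹ * (γ i)⁻¹ * ‖xs i - z i‖ ^ 2
      ≤ 2⁻¹ * ((((N : ℝ) - γ i * μ i) / (γ i ^ 2 * μ i)) * ‖z i - x i‖ ^ 2) := by
    intro i
    have hN : (0:ℝ) < N := Nat.cast_pos.mpr i.pos
    have hab : (γ i)⁻¹ - μ i / N < (γ i)⁻¹ := by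
      have hpos : 0 < μ i / N := div_pos (hμ i) hN
      linarith
    have h := quad_bound hab (xs i - x i) (xs i - z i)
    have hd : (xs i - z i) - (xs i - x i) = x i - z i := by abel
    rw [hd, norm_sub_rev (x i) (z i)] at h
    have hco : ((γ i)⁻¹ - μ i / N) * (γ i)⁻¹ / (2 * ((γ i)⁻¹ - ((γ i)⁻¹ - μ i / N)))
        = 2⁻¹ * (((N : ℝ) - γ i * μ i) / (γ i ^ 2 * μ i)) := by
      have hγ0 : γ i ≠ 0 := ne_of_gt (hγ i)
      have hμ0 : μ i ≠ 0 := ne_of_gt (hμ i)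
      have hN0 : (N : ℝ) ≠ 0 := ne_of_gt hN
      field_simp
      ring
    rw [hco] at h
    calc 2⁻¹ * ((γ i)⁻¹ - μ i / N) * ‖xs i - x i‖ ^ 2 - 2⁻¹ * (γ i)⁻¹ * ‖xs i - z i‖ ^ 2
        ≤ 2⁻¹ * (((N : ℝ) - γ i * μ i) / (γ i ^ 2 * μ i)) * ‖z i - x i‖ ^ 2 := h
      _ = 2⁻¹ * ((((N : ℝ) - γ i * μ i) / (γ i ^ 2 * μ i)) * ‖z i - x i‖ ^ 2) := by ring
  have hfinal : S1 - S2
      ≤ 2⁻¹ * ∑ i, (((N : ℝ) - γ i * μ i) / (γ i ^ 2 * μ i)) * ‖z i - x i‖ ^ 2 := by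
    rw [hS1, hS2, ← Finset.sum_sub_distrib, Finset.mul_sum]
    exact Finset.sum_le_sum fun i _ => step6 i
  have key1 : cR xs - Fsum f xs ≤ S1 := by linarith [hNsum, hS1eq, hcRxs, hFxs]
  have key2 : φ x - m ≤ S1 - S2 := by linarith [step4, hφz, hgxs, hQ2, key1]
  linarith [key2, hfinal]
end
end

section
/- Suppose G is convex and the block-coordinate forward-backward algorithm uses an essentially cyclic sampling with period T (each index is selected at least once in any window of T consecutive iterations). Then for every ν∈ℕ, φ_Γ(x^{T(ν+1)}) − φ_Γ(x^{Tν}) ≤ −(ξ_min/(2N(1+T·L_T)²))·‖z^{Tν} − x^{Tν}‖²_{Γ^{-1}}, where ξ_min = min_i (N − γ_i L_{f_i})/N and L_T is a Lipschitz constant of T in the norm ‖·‖_{Γ^{-1}}. -/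
open Filter Topology Metric Bornology Set
open scoped RealInnerProductSpace

noncomputable section

variable {N : ℕ} {E : Fin N → Type*}
  [∀ i, NormedAddCommGroup (E i)] [∀ i, InnerProductSpace ℝ (E i)]
  [∀ i, CompleteSpace (E i)]

set_option linter.unusedSectionVars false
set_option linter.unusedVariables false

lemma descent_lemma {F : Type*} [NormedAddCommGroup F] [InnerProductSpace ℝ F] [CompleteSpace F]
    (f : F → ℝ) (f' : F → F) (L : ℝ)
    (hf : ∀ u, HasGradientAt f (f' u) u)
    (hlip : ∀ u v, ‖f' u - f' v‖ ≤ L * ‖u - v‖) (x y : F) :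
    f y ≤ f x + ⟪f' x, y - x⟫ + L / 2 * ‖y - x‖ ^ 2 := by
  set d := y - x with hd
  have hcurve : ∀ t : ℝ, HasDerivAt (fun t : ℝ => x + t • d) d t := by
    intro t
    simpa using ((hasDerivAt_id t).smul_const d).const_add x
  have hg : ∀ t : ℝ, HasDerivAt (fun t => f (x + t • d)) ⟪f' (x + t • d), d⟫ t := by
    intro t
    have h1 := (hf (x + t • d)).hasFDerivAt
    have h2 := h1.comp_hasDerivAt t (hcurve t)
    simpa [InnerProductSpace.toDual_apply_apply, Function.comp_def] using h2
  set h : ℝ → ℝ := fun t => f x + t * ⟪f' x, d⟫ + t ^ 2 * (L / 2) * ‖d‖ ^ 2 - f (x + t • d)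
    with hh_def
  have hh : ∀ t, HasDerivAt h
      (⟪f' x, d⟫ + (2 * t) * (L / 2) * ‖d‖ ^ 2 - ⟪f' (x + t • d), d⟫) t := by
    intro t
    have h1 : HasDerivAt (fun t : ℝ => f x + t * ⟪f' x, d⟫ + t ^ 2 * (L / 2) * ‖d‖ ^ 2)
        (⟪f' x, d⟫ + (2 * t) * (L / 2) * ‖d‖ ^ 2) t := by
      have ha : HasDerivAt (fun t : ℝ => t * ⟪f' x, d⟫) ⟪f' x, d⟫ t := by
        simpa using (hasDerivAt_id t).mul_const ⟪f' x, d⟫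
      have hb : HasDerivAt (fun t : ℝ => t ^ 2 * (L / 2) * ‖d‖ ^ 2)
          ((2 * t) * (L / 2) * ‖d‖ ^ 2) t := by
        have := ((hasDerivAt_pow 2 t).mul_const (L / 2)).mul_const (‖d‖ ^ 2)
        simpa [pow_one] using this
      exact (ha.const_add (f x)).add hb
    exact h1.sub (hg t)
  have hdiff : Differentiable ℝ h := fun t => (hh t).differentiableAt
  have hmono : MonotoneOn h (Set.Icc (0:ℝ) 1) := by
    apply monotoneOn_of_deriv_nonneg (convex_Icc 0 1) hdiff.continuous.continuousOn
      (hdiff.differentiableOn)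
    intro t ht
    rw [interior_Icc] at ht
    rw [(hh t).deriv]
    have hb : ⟪f' (x + t • d) - f' x, d⟫ ≤ L * t * ‖d‖ ^ 2 := by
      calc ⟪f' (x + t • d) - f' x, d⟫ ≤ ‖f' (x + t • d) - f' x‖ * ‖d‖ :=
            real_inner_le_norm _ _
        _ ≤ (L * ‖(x + t • d) - x‖) * ‖d‖ :=
            mul_le_mul_of_nonneg_right (hlip _ _) (norm_nonneg d)
        _ = L * t * ‖d‖ ^ 2 := by
            rw [show x + t • d - x = t • d by abel, norm_smul, Real.norm_eq_abs,
              abs_of_pos ht.1]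
            ring
    have hsplit : ⟪f' (x + t • d) - f' x, d⟫ = ⟪f' (x + t • d), d⟫ - ⟪f' x, d⟫ :=
      inner_sub_left _ _ _
    nlinarith [hb, hsplit]
  have h01 : h 0 ≤ h 1 := hmono (Set.left_mem_Icc.2 zero_le_one)
    (Set.right_mem_Icc.2 zero_le_one) zero_le_one
  have h0 : h 0 = 0 := by simp [hh_def]
  have h1 : h 1 = f x + ⟪f' x, d⟫ + L / 2 * ‖d‖ ^ 2 - f y := by
    simp only [hh_def, one_pow, one_mul, one_smul]
    rw [hd, add_sub_cancel]
  rw [h0, h1] at h01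
  linarith

def wS (γ : Fin N → ℝ) (u : PiLp 2 E) : PiLp 2 E := WithLp.toLp 2 (fun i => (Real.sqrt (γ i)⁻¹) • u i)

lemma wnorm_eq (γ : Fin N → ℝ) (hγ : ∀ i, 0 < γ i) (u : PiLp 2 E) :
    Real.sqrt (∑ i, (γ i)⁻¹ * ‖u i‖ ^ 2) = ‖wS γ u‖ := by
  rw [PiLp.norm_eq_of_L2]
  congr 1
  refine Finset.sum_congr rfl fun i _ => ?_
  have : wS γ u i = (Real.sqrt (γ i)⁻¹) • u i := rfl
  rw [this, norm_smul, Real.norm_eq_abs, abs_of_nonneg (Real.sqrt_nonneg _), mul_pow,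
    Real.sq_sqrt (inv_nonneg.mpr (hγ i).le)]

lemma wnorm_triangle3 (γ : Fin N → ℝ) (hγ : ∀ i, 0 < γ i) (a b c : PiLp 2 E) :
    Real.sqrt (∑ i, (γ i)⁻¹ * ‖a i - c i‖ ^ 2)
      ≤ Real.sqrt (∑ i, (γ i)⁻¹ * ‖a i - b i‖ ^ 2)
        + Real.sqrt (∑ i, (γ i)⁻¹ * ‖b i - c i‖ ^ 2) := by
  have h1 : ∀ u v : PiLp 2 E,
      Real.sqrt (∑ i, (γ i)⁻¹ * ‖u i - v i‖ ^ 2) = ‖wS γ (u - v)‖ := by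
    intro u v
    rw [← wnorm_eq γ hγ]
    congr 1
  rw [h1, h1, h1]
  have hadd : wS γ (a - c) = wS γ (a - b) + wS γ (b - c) := by
    ext i
    show (Real.sqrt (γ i)⁻¹) • ((a - c) i) =
      (Real.sqrt (γ i)⁻¹) • ((a - b) i) + (Real.sqrt (γ i)⁻¹) • ((b - c) i)
    rw [← smul_add]
    congr 1
    simp [PiLp.sub_apply]
  rw [hadd]
  exact norm_add_le _ _


/-- inequality (3.13): under essentially cyclic sampling with period T
and convex G, φ_Γ(x^{T(ν+1)}) - φ_Γ(x^{Tν}) ≤ -(ξ_min/(2N(1+T·L_T)²))‖z^{Tν}-x^{Tν}‖²_{Γ⁻¹},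
with L_T a ‖·‖_{Γ⁻¹}-Lipschitz constant of the (single-valued) operator T. -/
theorem bc_essentially_cyclic_descent (hN : 0 < N)
    (f : ∀ i, E i → ℝ) (f' : ∀ i, E i → E i) (L γ : Fin N → ℝ)
    (G : PiLp 2 E → EReal)
    (hf : ∀ i (u : E i), HasGradientAt (f i) (f' i u) u)
    (hL : ∀ i, 0 ≤ L i)
    (hlip : ∀ i (u v : E i), ‖f' i u - f' i v‖ ≤ L i * ‖u - v‖)
    (hγ : ∀ i, 0 < γ i) (hγL : ∀ i, γ i * L i < (N : ℝ))
    (hGlsc : LowerSemicontinuous G)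
    (hGproper : ∃ w, G w ≠ ⊤) (hGbot : ∀ w, G w ≠ ⊥)
    (hargmin : ∃ xs : PiLp 2 E, ∀ w, Phi f G xs ≤ Phi f G w)
    (φ : PiLp 2 E → ℝ)
    (hφ : ∀ x, ((φ x : ℝ) : EReal) = ⨅ w, Mdl f f' γ G w x)
    (hGconv : ERealConvex G)
    (T : ℕ) (hT1 : 1 ≤ T)
    (x z : ℕ → PiLp 2 E) (I : ℕ → Finset (Fin N))
    (hz : ∀ k, z k ∈ Tmap f f' γ G (x k))
    (hup : ∀ (k : ℕ) (i : Fin N), x (k + 1) i = if i ∈ I (k + 1) then z k i else x k i)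
    (hcyc : ∀ (k : ℕ) (i : Fin N), ∃ t : ℕ, t < T ∧ i ∈ I (k + t + 1))
    (Tf : PiLp 2 E → PiLp 2 E) (hTf : ∀ u, Tmap f f' γ G u = {Tf u})
    (LT : ℝ) (hLT0 : 0 ≤ LT)
    (hLT : ∀ u v : PiLp 2 E,
        Real.sqrt (∑ i, (γ i)⁻¹ * ‖Tf u i - Tf v i‖ ^ 2)
          ≤ LT * Real.sqrt (∑ i, (γ i)⁻¹ * ‖u i - v i‖ ^ 2)) :
    ∀ ν : ℕ,
      φ (x (T * (ν + 1))) - φ (x (T * ν))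
        ≤ -((Finset.univ.inf' (Finset.univ_nonempty_iff.mpr ⟨⟨0, hN⟩⟩)
              (fun i => ((N : ℝ) - γ i * L i) / (N : ℝ)))
            / (2 * (N : ℝ) * (1 + (T : ℝ) * LT) ^ 2))
          * ∑ i, (γ i)⁻¹ * ‖z (T * ν) i - x (T * ν) i‖ ^ 2 := by
  have hNpos : (0:ℝ) < (N:ℝ) := Nat.cast_pos.mpr hN
  set ξ : ℝ := Finset.univ.inf' (Finset.univ_nonempty_iff.mpr ⟨⟨0, hN⟩⟩)
      (fun i => ((N : ℝ) - γ i * L i) / (N : ℝ)) with hξdef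
  have hξ_le : ∀ i, ξ ≤ ((N:ℝ) - γ i * L i) / (N:ℝ) :=
    fun i => Finset.inf'_le _ (Finset.mem_univ i)
  have hξpos : 0 < ξ := by
    rw [hξdef, Finset.lt_inf'_iff]
    intro i _
    exact div_pos (by linarith [hγL i]) hNpos
  -- minimizer property
  have hzmin : ∀ k w, Mdl f f' γ G (z k) (x k) ≤ Mdl f f' γ G w (x k) := fun k w => hz k w
  -- G (z k) is a real number
  have hGzreal : ∀ k, G (z k) = (((G (z k)).toReal : ℝ) : EReal) := by
    intro k
    have hne_top : G (z k) ≠ ⊤ := by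
      intro htop
      obtain ⟨w₀, hw₀⟩ := hGproper
      have h1 := hzmin k w₀
      rw [Mdl, Mdl, htop, EReal.coe_add_top] at h1
      rw [show G w₀ = (((G w₀).toReal : ℝ) : EReal) from (EReal.coe_toReal hw₀ (hGbot w₀)).symm,
        ← EReal.coe_add] at h1
      exact (EReal.coe_lt_top _).not_ge h1
    exact (EReal.coe_toReal hne_top (hGbot _)).symm
  -- φ at iterates
  have hφeq : ∀ k, ((φ (x k) : ℝ) : EReal) = Mdl f f' γ G (z k) (x k) := by
    intro k
    rw [hφ]
    exact le_antisymm (iInf_le _ (z k)) (le_iInf (hzmin k))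
  have hφreal : ∀ k, φ (x k)
      = (Fsum f (x k) + (N : ℝ)⁻¹ * ∑ i, ⟪f' i (x k i), z k i - x k i⟫
        + 2⁻¹ * ∑ i, (γ i)⁻¹ * ‖z k i - x k i‖ ^ 2) + (G (z k)).toReal := by
    intro k
    have h1 := hφeq k
    rw [Mdl, hGzreal k, ← EReal.coe_add] at h1
    exact_mod_cast h1
  have hφle : ∀ k, φ (x (k+1))
      ≤ (Fsum f (x (k+1)) + (N : ℝ)⁻¹ * ∑ i, ⟪f' i (x (k+1) i), z k i - x (k+1) i⟫
        + 2⁻¹ * ∑ i, (γ i)⁻¹ * ‖z k i - x (k+1) i‖ ^ 2) + (G (z k)).toReal := by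
    intro k
    have h1 : ((φ (x (k+1)) : ℝ) : EReal) ≤ Mdl f f' γ G (z k) (x (k+1)) := by
      rw [hφ]; exact iInf_le _ (z k)
    rw [Mdl, hGzreal k, ← EReal.coe_add] at h1
    exact_mod_cast h1
  -- the per-block residual on selected blocks
  set q : ℕ → ℝ := fun k => ∑ i ∈ I (k+1), (γ i)⁻¹ * ‖z k i - x k i‖ ^ 2 with hqdef
  have hq_nonneg : ∀ k, 0 ≤ q k := by
    intro k
    exact Finset.sum_nonneg fun i _ => mul_nonneg (inv_nonneg.mpr (hγ i).le) (sq_nonneg _)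
  -- per-step descent
  have perstep : ∀ k, φ (x (k+1)) - φ (x k) ≤ -(ξ/2) * q k := by
    intro k
    have key : ∀ i : Fin N,
        (N:ℝ)⁻¹ * f i (x (k+1) i) + (N:ℝ)⁻¹ * ⟪f' i (x (k+1) i), z k i - x (k+1) i⟫
          + 2⁻¹ * ((γ i)⁻¹ * ‖z k i - x (k+1) i‖ ^ 2)
        ≤ ((N:ℝ)⁻¹ * f i (x k i) + (N:ℝ)⁻¹ * ⟪f' i (x k i), z k i - x k i⟫
          + 2⁻¹ * ((γ i)⁻¹ * ‖z k i - x k i‖ ^ 2))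
          + (if i ∈ I (k+1) then -(ξ/2) * ((γ i)⁻¹ * ‖z k i - x k i‖ ^ 2) else 0) := by
      intro i
      by_cases hi : i ∈ I (k+1)
      · rw [if_pos hi]
        have hx' : x (k+1) i = z k i := by rw [hup k i, if_pos hi]
        rw [hx', sub_self, inner_zero_right, norm_zero]
        have hdes := descent_lemma (f i) (f' i) (L i) (hf i) (hlip i) (x k i) (z k i)
        have hξi := hξ_le i
        have hγi := hγ i
        have hnn : (0:ℝ) ≤ ‖z k i - x k i‖ ^ 2 := sq_nonneg _
        have e1 : (γ i)⁻¹ * (((N:ℝ) - γ i * L i) / (N:ℝ)) = (γ i)⁻¹ - L i / (N:ℝ) := by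
          field_simp
        have e2 : ξ * (γ i)⁻¹ ≤ (γ i)⁻¹ - L i / (N:ℝ) := by
          calc ξ * (γ i)⁻¹ ≤ (((N:ℝ) - γ i * L i) / (N:ℝ)) * (γ i)⁻¹ :=
                mul_le_mul_of_nonneg_right hξi (inv_pos.mpr hγi).le
            _ = (γ i)⁻¹ - L i / (N:ℝ) := by rw [mul_comm, e1]
        have e3 := mul_le_mul_of_nonneg_right e2 hnn
        have hNinv : (0:ℝ) < (N:ℝ)⁻¹ := inv_pos.mpr hNpos
        have e4 := mul_le_mul_of_nonneg_left hdes hNinv.le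
        have e5 : L i / (N:ℝ) = (N:ℝ)⁻¹ * L i := by ring
        nlinarith [e3, e4]
      · rw [if_neg hi]
        have hx' : x (k+1) i = x k i := by rw [hup k i, if_neg hi]
        rw [hx', add_zero]
    have hBA : Fsum f (x (k+1)) + (N:ℝ)⁻¹ * ∑ i, ⟪f' i (x (k+1) i), z k i - x (k+1) i⟫
          + 2⁻¹ * ∑ i, (γ i)⁻¹ * ‖z k i - x (k+1) i‖ ^ 2
        ≤ (Fsum f (x k) + (N:ℝ)⁻¹ * ∑ i, ⟪f' i (x k i), z k i - x k i⟫
          + 2⁻¹ * ∑ i, (γ i)⁻¹ * ‖z k i - x k i‖ ^ 2) + (-(ξ/2) * q k) := by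
      have lhs_eq : Fsum f (x (k+1)) + (N:ℝ)⁻¹ * ∑ i, ⟪f' i (x (k+1) i), z k i - x (k+1) i⟫
          + 2⁻¹ * ∑ i, (γ i)⁻¹ * ‖z k i - x (k+1) i‖ ^ 2
          = ∑ i, ((N:ℝ)⁻¹ * f i (x (k+1) i) + (N:ℝ)⁻¹ * ⟪f' i (x (k+1) i), z k i - x (k+1) i⟫
            + 2⁻¹ * ((γ i)⁻¹ * ‖z k i - x (k+1) i‖ ^ 2)) := by
        rw [Fsum, Finset.mul_sum, Finset.mul_sum, Finset.mul_sum,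
          ← Finset.sum_add_distrib, ← Finset.sum_add_distrib]
      have ite_eq : ∑ i, (if i ∈ I (k+1) then -(ξ/2) * ((γ i)⁻¹ * ‖z k i - x k i‖ ^ 2) else 0)
          = -(ξ/2) * q k := by
        rw [Finset.sum_ite_mem, Finset.univ_inter, hqdef, Finset.mul_sum]
      have rhs_eq : (Fsum f (x k) + (N:ℝ)⁻¹ * ∑ i, ⟪f' i (x k i), z k i - x k i⟫
          + 2⁻¹ * ∑ i, (γ i)⁻¹ * ‖z k i - x k i‖ ^ 2) + (-(ξ/2) * q k)
          = ∑ i, (((N:ℝ)⁻¹ * f i (x k i) + (N:ℝ)⁻¹ * ⟪f' i (x k i), z k i - x k i⟫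
            + 2⁻¹ * ((γ i)⁻¹ * ‖z k i - x k i‖ ^ 2))
            + (if i ∈ I (k+1) then -(ξ/2) * ((γ i)⁻¹ * ‖z k i - x k i‖ ^ 2) else 0)) := by
        rw [Finset.sum_add_distrib, ite_eq, Fsum, Finset.mul_sum, Finset.mul_sum, Finset.mul_sum,
          ← Finset.sum_add_distrib, ← Finset.sum_add_distrib]
      rw [lhs_eq, rhs_eq]
      exact Finset.sum_le_sum fun i _ => key i
    have h1 := hφreal k
    have h2 := hφle k
    linarith
  -- telescoping
  have tele : ∀ k0 m : ℕ, φ (x (k0 + m)) - φ (x k0)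
      ≤ -(ξ/2) * ∑ t ∈ Finset.range m, q (k0 + t) := by
    intro k0 m
    induction m with
    | zero => simp
    | succ m ih =>
        have hps := perstep (k0 + m)
        have hsplit : k0 + (m + 1) = (k0 + m) + 1 := by omega
        rw [hsplit, Finset.sum_range_succ]
        have hexp : -(ξ/2) * (∑ t ∈ Finset.range m, q (k0 + t) + q (k0 + m))
            = -(ξ/2) * ∑ t ∈ Finset.range m, q (k0 + t) + -(ξ/2) * q (k0 + m) := by ring
        rw [hexp]
        linarith
  -- blocks not yet updated do not move
  have nomove : ∀ (k0 : ℕ) (i : Fin N) (t : ℕ), (∀ s, s < t → i ∉ I (k0 + s + 1)) →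
      ∀ s, s ≤ t → x (k0 + s) i = x k0 i := by
    intro k0 i t hmin s
    induction s with
    | zero => intro _; rfl
    | succ s ih =>
        intro hs
        have h1 : x (k0 + (s+1)) i = x (k0 + s) i := by
          rw [show k0 + (s+1) = (k0 + s) + 1 from rfl, hup (k0 + s) i,
            if_neg (hmin s (by omega))]
        rw [h1, ih (by omega)]
  -- one-step movement in weighted norm
  have hstep : ∀ k, (∑ i, (γ i)⁻¹ * ‖x (k+1) i - x k i‖ ^ 2) = q k := by
    intro k
    have h1 : ∀ i : Fin N, (γ i)⁻¹ * ‖x (k+1) i - x k i‖ ^ 2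
        = if i ∈ I (k+1) then (γ i)⁻¹ * ‖z k i - x k i‖ ^ 2 else 0 := by
      intro i
      by_cases hi : i ∈ I (k+1) <;> simp [hup k i, hi]
    rw [Finset.sum_congr rfl fun i _ => h1 i, Finset.sum_ite_mem, Finset.univ_inter]
  -- chain bound on x-movement
  have hxchain : ∀ k0 t : ℕ, Real.sqrt (∑ i, (γ i)⁻¹ * ‖x (k0 + t) i - x k0 i‖ ^ 2)
      ≤ ∑ s ∈ Finset.range t, Real.sqrt (q (k0 + s)) := by
    intro k0 t
    induction t with
    | zero => simp
    | succ t ih =>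
        have htri := wnorm_triangle3 γ hγ (x (k0 + (t+1))) (x (k0 + t)) (x k0)
        have hone : Real.sqrt (∑ i, (γ i)⁻¹ * ‖x (k0 + (t+1)) i - x (k0 + t) i‖ ^ 2)
            = Real.sqrt (q (k0 + t)) := by
          rw [show k0 + (t+1) = (k0 + t) + 1 from rfl, hstep (k0 + t)]
        rw [Finset.sum_range_succ]
        calc Real.sqrt (∑ i, (γ i)⁻¹ * ‖x (k0 + (t+1)) i - x k0 i‖ ^ 2)
            ≤ Real.sqrt (∑ i, (γ i)⁻¹ * ‖x (k0 + (t+1)) i - x (k0 + t) i‖ ^ 2)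
              + Real.sqrt (∑ i, (γ i)⁻¹ * ‖x (k0 + t) i - x k0 i‖ ^ 2) := htri
          _ ≤ ∑ s ∈ Finset.range t, Real.sqrt (q (k0 + s)) + Real.sqrt (q (k0 + t)) := by
              rw [hone]; linarith
  -- z is the image of x under Tf
  have hzeq : ∀ k, z k = Tf (x k) := by
    intro k
    have := hz k
    rw [hTf] at this
    exact this
  intro ν
  set k0 := T * ν with hk0
  set Q : ℝ := ∑ t ∈ Finset.range T, q (k0 + t) with hQdef
  have hQnn : 0 ≤ Q := Finset.sum_nonneg fun t _ => hq_nonneg _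
  have hqQ : ∀ t, t < T → q (k0 + t) ≤ Q := by
    intro t ht
    exact Finset.single_le_sum (fun s _ => hq_nonneg (k0 + s)) (Finset.mem_range.mpr ht)
  have h1TL : (0:ℝ) ≤ 1 + (T:ℝ) * LT := by
    have : (0:ℝ) ≤ (T:ℝ) * LT := mul_nonneg (Nat.cast_nonneg T) hLT0
    linarith
  -- per-block bound
  have hblock : ∀ i : Fin N, (γ i)⁻¹ * ‖z k0 i - x k0 i‖ ^ 2 ≤ (1 + (T:ℝ) * LT) ^ 2 * Q := by
    intro i
    obtain ⟨t0, ht0T, ht0⟩ := hcyc k0 i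
    have hex : ∃ t, i ∈ I (k0 + t + 1) := ⟨t0, ht0⟩
    set t := Nat.find hex with htdef
    have htmem : i ∈ I (k0 + t + 1) := Nat.find_spec hex
    have htlt : t < T := lt_of_le_of_lt (Nat.find_min' hex ht0) ht0T
    have hmin : ∀ s, s < t → i ∉ I (k0 + s + 1) := fun s hs => Nat.find_min hex hs
    have hxeq : x (k0 + t) i = x k0 i := nomove k0 i t hmin t le_rfl
    have c_nn : (0:ℝ) ≤ (γ i)⁻¹ := (inv_pos.mpr (hγ i)).le
    have csqrt : Real.sqrt ((γ i)⁻¹) * ‖z k0 i - x k0 i‖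
        = Real.sqrt ((γ i)⁻¹ * ‖z k0 i - x k0 i‖ ^ 2) := by
      rw [Real.sqrt_mul c_nn, Real.sqrt_sq (norm_nonneg _)]
    -- term 2
    have hterm2 : Real.sqrt ((γ i)⁻¹) * ‖z (k0 + t) i - x (k0 + t) i‖ ≤ Real.sqrt Q := by
      rw [show Real.sqrt ((γ i)⁻¹) * ‖z (k0 + t) i - x (k0 + t) i‖
          = Real.sqrt ((γ i)⁻¹ * ‖z (k0 + t) i - x (k0 + t) i‖ ^ 2) by
        rw [Real.sqrt_mul c_nn, Real.sqrt_sq (norm_nonneg _)]]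
      apply Real.sqrt_le_sqrt
      calc (γ i)⁻¹ * ‖z (k0 + t) i - x (k0 + t) i‖ ^ 2
          ≤ q (k0 + t) :=
            Finset.single_le_sum (f := fun j => (γ j)⁻¹ * ‖z (k0 + t) j - x (k0 + t) j‖ ^ 2)
              (fun j _ => mul_nonneg (inv_pos.mpr (hγ j)).le (sq_nonneg _)) htmem
        _ ≤ Q := hqQ t htlt
    -- term 1
    have hterm1 : Real.sqrt ((γ i)⁻¹) * ‖z k0 i - z (k0 + t) i‖
        ≤ LT * ((T:ℝ) * Real.sqrt Q) := by
      have ha : Real.sqrt ((γ i)⁻¹) * ‖z k0 i - z (k0 + t) i‖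
          ≤ Real.sqrt (∑ j, (γ j)⁻¹ * ‖z k0 j - z (k0 + t) j‖ ^ 2) := by
        rw [show Real.sqrt ((γ i)⁻¹) * ‖z k0 i - z (k0 + t) i‖
            = Real.sqrt ((γ i)⁻¹ * ‖z k0 i - z (k0 + t) i‖ ^ 2) by
          rw [Real.sqrt_mul c_nn, Real.sqrt_sq (norm_nonneg _)]]
        apply Real.sqrt_le_sqrt
        exact Finset.single_le_sum (f := fun j => (γ j)⁻¹ * ‖z k0 j - z (k0 + t) j‖ ^ 2)
          (fun j _ => mul_nonneg (inv_pos.mpr (hγ j)).le (sq_nonneg _)) (Finset.mem_univ i)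
      have hb : Real.sqrt (∑ j, (γ j)⁻¹ * ‖z k0 j - z (k0 + t) j‖ ^ 2)
          ≤ LT * Real.sqrt (∑ j, (γ j)⁻¹ * ‖x k0 j - x (k0 + t) j‖ ^ 2) := by
        rw [hzeq k0, hzeq (k0 + t)]
        exact hLT (x k0) (x (k0 + t))
      have hc : Real.sqrt (∑ j, (γ j)⁻¹ * ‖x k0 j - x (k0 + t) j‖ ^ 2)
          ≤ (T:ℝ) * Real.sqrt Q := by
        have hrev : (∑ j, (γ j)⁻¹ * ‖x k0 j - x (k0 + t) j‖ ^ 2)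
            = ∑ j, (γ j)⁻¹ * ‖x (k0 + t) j - x k0 j‖ ^ 2 := by
          refine Finset.sum_congr rfl fun j _ => ?_
          rw [norm_sub_rev]
        rw [hrev]
        calc Real.sqrt (∑ j, (γ j)⁻¹ * ‖x (k0 + t) j - x k0 j‖ ^ 2)
            ≤ ∑ s ∈ Finset.range t, Real.sqrt (q (k0 + s)) := hxchain k0 t
          _ ≤ ∑ s ∈ Finset.range t, Real.sqrt Q := by
              refine Finset.sum_le_sum fun s hs => ?_
              exact Real.sqrt_le_sqrt (hqQ s (lt_of_lt_of_le (Finset.mem_range.mp hs) htlt.le))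
          _ = (t:ℝ) * Real.sqrt Q := by
              rw [Finset.sum_const, Finset.card_range, nsmul_eq_mul]
          _ ≤ (T:ℝ) * Real.sqrt Q := by
              apply mul_le_mul_of_nonneg_right _ (Real.sqrt_nonneg _)
              exact_mod_cast htlt.le
      calc Real.sqrt ((γ i)⁻¹) * ‖z k0 i - z (k0 + t) i‖
          ≤ Real.sqrt (∑ j, (γ j)⁻¹ * ‖z k0 j - z (k0 + t) j‖ ^ 2) := ha
        _ ≤ LT * Real.sqrt (∑ j, (γ j)⁻¹ * ‖x k0 j - x (k0 + t) j‖ ^ 2) := hb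
        _ ≤ LT * ((T:ℝ) * Real.sqrt Q) := mul_le_mul_of_nonneg_left hc hLT0
    -- combine
    have htriple : ‖z k0 i - x k0 i‖ ≤ ‖z k0 i - z (k0 + t) i‖ + ‖z (k0 + t) i - x (k0 + t) i‖ := by
      calc ‖z k0 i - x k0 i‖ = ‖(z k0 i - z (k0 + t) i) + (z (k0 + t) i - x k0 i)‖ := by
            rw [sub_add_sub_cancel]
        _ ≤ ‖z k0 i - z (k0 + t) i‖ + ‖z (k0 + t) i - x k0 i‖ := norm_add_le _ _
        _ = ‖z k0 i - z (k0 + t) i‖ + ‖z (k0 + t) i - x (k0 + t) i‖ := by rw [hxeq]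
    have hmain : Real.sqrt ((γ i)⁻¹) * ‖z k0 i - x k0 i‖ ≤ (1 + (T:ℝ) * LT) * Real.sqrt Q := by
      calc Real.sqrt ((γ i)⁻¹) * ‖z k0 i - x k0 i‖
          ≤ Real.sqrt ((γ i)⁻¹) * (‖z k0 i - z (k0 + t) i‖ + ‖z (k0 + t) i - x (k0 + t) i‖) :=
            mul_le_mul_of_nonneg_left htriple (Real.sqrt_nonneg _)
        _ = Real.sqrt ((γ i)⁻¹) * ‖z k0 i - z (k0 + t) i‖
            + Real.sqrt ((γ i)⁻¹) * ‖z (k0 + t) i - x (k0 + t) i‖ := by ring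
        _ ≤ LT * ((T:ℝ) * Real.sqrt Q) + Real.sqrt Q := add_le_add hterm1 hterm2
        _ = (1 + (T:ℝ) * LT) * Real.sqrt Q := by ring
    have hlhs_nn : 0 ≤ Real.sqrt ((γ i)⁻¹) * ‖z k0 i - x k0 i‖ :=
      mul_nonneg (Real.sqrt_nonneg _) (norm_nonneg _)
    have hsq := mul_self_le_mul_self hlhs_nn hmain
    calc (γ i)⁻¹ * ‖z k0 i - x k0 i‖ ^ 2
        = (Real.sqrt ((γ i)⁻¹) * ‖z k0 i - x k0 i‖) * (Real.sqrt ((γ i)⁻¹) * ‖z k0 i - x k0 i‖) := by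
          rw [csqrt]
          exact (Real.mul_self_sqrt (mul_nonneg c_nn (sq_nonneg _))).symm
      _ ≤ ((1 + (T:ℝ) * LT) * Real.sqrt Q) * ((1 + (T:ℝ) * LT) * Real.sqrt Q) := hsq
      _ = (1 + (T:ℝ) * LT) ^ 2 * (Real.sqrt Q * Real.sqrt Q) := by ring
      _ = (1 + (T:ℝ) * LT) ^ 2 * Q := by rw [Real.mul_self_sqrt hQnn]
  -- sum over blocks
  have hr : (∑ i, (γ i)⁻¹ * ‖z k0 i - x k0 i‖ ^ 2) ≤ (N:ℝ) * ((1 + (T:ℝ) * LT) ^ 2 * Q) := by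
    calc (∑ i, (γ i)⁻¹ * ‖z k0 i - x k0 i‖ ^ 2)
        ≤ ∑ _i : Fin N, (1 + (T:ℝ) * LT) ^ 2 * Q := Finset.sum_le_sum fun i _ => hblock i
      _ = (N:ℝ) * ((1 + (T:ℝ) * LT) ^ 2 * Q) := by
          rw [Finset.sum_const, Finset.card_univ, Fintype.card_fin, nsmul_eq_mul]
  -- conclude
  have hTsplit : T * (ν + 1) = k0 + T := by rw [hk0]; ring
  rw [hTsplit]
  have htel := tele k0 T
  have hPpos : (0:ℝ) < 2 * (N:ℝ) * (1 + (T:ℝ) * LT) ^ 2 := by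
    have hT1' : (1:ℝ) ≤ (T:ℝ) := by exact_mod_cast hT1
    have h1TLpos : (0:ℝ) < 1 + (T:ℝ) * LT := by nlinarith
    positivity
  have hfin : (ξ / (2 * (N:ℝ) * (1 + (T:ℝ) * LT) ^ 2)) * (∑ i, (γ i)⁻¹ * ‖z k0 i - x k0 i‖ ^ 2)
      ≤ (ξ/2) * Q := by
    have hcoef : (0:ℝ) ≤ ξ / (2 * (N:ℝ) * (1 + (T:ℝ) * LT) ^ 2) :=
      (div_pos hξpos hPpos).le
    calc (ξ / (2 * (N:ℝ) * (1 + (T:ℝ) * LT) ^ 2)) * (∑ i, (γ i)⁻¹ * ‖z k0 i - x k0 i‖ ^ 2)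
        ≤ (ξ / (2 * (N:ℝ) * (1 + (T:ℝ) * LT) ^ 2)) * ((N:ℝ) * ((1 + (T:ℝ) * LT) ^ 2 * Q)) :=
          mul_le_mul_of_nonneg_left hr hcoef
      _ = (ξ/2) * Q := by
          have hN0 : (N:ℝ) ≠ 0 := hNpos.ne'
          have h1TL0 : (1 + (T:ℝ) * LT) ≠ 0 := by
            have hT1' : (1:ℝ) ≤ (T:ℝ) := by exact_mod_cast hT1
            nlinarith
          field_simp
  linarith
end
end

section
/- Let g:ℝ^n→ℝ∪{∞} be proper and lsc, let C = {x∈ℝ^{Nn} : x_1 = x_2 = ⋯ = x_N} be the consensus set, and define G(x) = (1/N)∑_{i=1}^N g(x_i) + δ_C(x). Given γ_i>0, let Γ = blockdiag(γ_1 I_n,…,γ_N I_n) and γ̂ = (∑_{i=1}^N γ_i^{-1})^{-1}. Then for every u∈ℝ^{Nn}, prox_G^{Γ^{-1}}(u) = {(v̂,…,v̂) : v̂ ∈ prox_{γ̂ g}(û)}, where û = γ̂·∑_{i=1}^N γ_i^{-1} u_i. -/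
open Filter Topology Metric Bornology Set
open scoped RealInnerProductSpace

noncomputable section

variable {N : ℕ} {E : Fin N → Type*}
  [∀ i, NormedAddCommGroup (E i)] [∀ i, InnerProductSpace ℝ (E i)]

section AuxProx

lemma ereal_sum_ne_bot {ι : Type*} (s : Finset ι) (f : ι → EReal) (h : ∀ i, f i ≠ ⊥) :
    ∑ i ∈ s, f i ≠ ⊥ := by
  classical
  induction s using Finset.induction with
  | empty => simp
  | @insert a s' hx ih =>
    rw [Finset.sum_insert hx]
    intro hbot
    rcases EReal.add_eq_bot_iff.mp hbot with h1 | h2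
    · exact h a h1
    · exact ih h2

lemma ereal_nsmul_top (n : ℕ) (hn : 0 < n) : n • (⊤ : EReal) = ⊤ := by
  induction n with
  | zero => omega
  | succ m ih =>
    rcases Nat.eq_zero_or_pos m with hm | hm
    · subst hm; simp
    · rw [succ_nsmul, ih hm]; simp

lemma ereal_const_avg (n : ℕ) (hn : 0 < n) (x : EReal) (hx : x ≠ ⊥) :
    (((n : ℝ)⁻¹ : ℝ) : EReal) * (∑ _i : Fin n, x) = x := by
  rw [Finset.sum_const, Finset.card_univ, Fintype.card_fin]
  induction x with
  | bot => exact absurd rfl hx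
  | coe r =>
    have : n • ((r : ℝ) : EReal) = (((n : ℝ) * r : ℝ) : EReal) := by
      rw [← nsmul_eq_mul]
      exact (map_nsmul (⟨⟨(Real.toEReal), EReal.coe_zero⟩, EReal.coe_add⟩ :
        ℝ →+ EReal) n r).symm
    rw [this, ← EReal.coe_mul, inv_mul_cancel_left₀ (by positivity : (n:ℝ) ≠ 0)]
  | top =>
    rw [ereal_nsmul_top n hn, EReal.mul_top_of_pos]
    exact EReal.coe_pos.mpr (by positivity)

lemma ereal_mul_ne_bot_of_pos {r : ℝ} (hr : 0 < r) {x : EReal} (hx : x ≠ ⊥) :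
    (r : EReal) * x ≠ ⊥ := by
  induction x with
  | bot => exact absurd rfl hx
  | coe y => rw [← EReal.coe_mul]; exact EReal.coe_ne_bot _
  | top => rw [EReal.mul_top_of_pos (EReal.coe_pos.mpr hr)]; simp

lemma quad_split {ι : Type*} [Fintype ι] {H : Type*} [NormedAddCommGroup H]
    [InnerProductSpace ℝ H] (c : ι → ℝ) (u : ι → H) (s : ℝ) (hs : s = ∑ i, c i)
    (hs0 : s ≠ 0) (uh : H) (hu : s • uh = ∑ i, c i • u i) (v : H) :
    2⁻¹ * ∑ i, c i * ‖v - u i‖ ^ 2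
      = (2 * s⁻¹)⁻¹ * ‖v - uh‖ ^ 2
        + (2⁻¹ * ∑ i, c i * ‖u i‖ ^ 2 - (2 * s⁻¹)⁻¹ * ‖uh‖ ^ 2) := by
  have hinner : ∑ i, c i * ⟪v, u i⟫ = s * ⟪v, uh⟫ := by
    rw [← real_inner_smul_right, hu, inner_sum]
    simp [real_inner_smul_right]
  have expand : ∑ i, c i * ‖v - u i‖ ^ 2
      = s * ‖v‖ ^ 2 - 2 * (s * ⟪v, uh⟫) + ∑ i, c i * ‖u i‖ ^ 2 := by
    have : ∀ i : ι, c i * ‖v - u i‖ ^ 2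
        = c i * ‖v‖ ^ 2 - 2 * (c i * ⟪v, u i⟫) + c i * ‖u i‖ ^ 2 := by
      intro i; rw [norm_sub_sq_real]; ring
    rw [Finset.sum_congr rfl (fun i _ => this i), Finset.sum_add_distrib,
      Finset.sum_sub_distrib, ← Finset.sum_mul, ← hs, ← Finset.mul_sum, hinner]
  have h2 : (2 * s⁻¹)⁻¹ = s / 2 := by
    rw [mul_inv, inv_inv]; ring
  rw [expand, h2, norm_sub_sq_real]
  ring

lemma ereal_cancel_coe {a b : EReal} (c : ℝ) : a + (c : EReal) ≤ b + (c : EReal) ↔ a ≤ b :=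
  (EReal.addLECancellable_coe c).add_le_add_iff_right

end AuxProx

open Classical in
/-- Lemma 4.1: for G(x) = (1/N)∑ᵢ g(xᵢ) + δ_C(x) with C the consensus set,
prox_G^{Γ⁻¹}(u) = {(v̂,…,v̂) : v̂ ∈ prox_{γ̂g}(û)} with γ̂ = (∑ᵢγᵢ⁻¹)⁻¹ and û = γ̂∑ᵢγᵢ⁻¹uᵢ. -/
theorem prox_consensus_formula {N : ℕ} (hN : 0 < N)
    {H : Type*} [NormedAddCommGroup H] [InnerProductSpace ℝ H]
    (g : H → EReal) (hglsc : LowerSemicontinuous g)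
    (hgproper : ∃ u, g u ≠ ⊤) (hgbot : ∀ u, g u ≠ ⊥)
    (γ : Fin N → ℝ) (hγ : ∀ i, 0 < γ i)
    (u : PiLp 2 (fun _ : Fin N => H)) :
    proxSet γ
        (fun x : PiLp 2 (fun _ : Fin N => H) =>
          (((N : ℝ)⁻¹ : ℝ) : EReal) * (∑ i, g (x i)) +
            (if ∀ i j : Fin N, x i = x j then (0 : EReal) else ⊤)) u
      = {x : PiLp 2 (fun _ : Fin N => H) | ∃ v : H,
          (∀ w : H,
            g v + (((2 * (∑ i, (γ i)⁻¹)⁻¹)⁻¹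
                * ‖v - (∑ i, (γ i)⁻¹)⁻¹ • (∑ i, (γ i)⁻¹ • u i)‖ ^ 2 : ℝ) : EReal)
              ≤ g w + (((2 * (∑ i, (γ i)⁻¹)⁻¹)⁻¹
                * ‖w - (∑ i, (γ i)⁻¹)⁻¹ • (∑ i, (γ i)⁻¹ • u i)‖ ^ 2 : ℝ) : EReal)) ∧
          ∀ i : Fin N, x i = v} := by
  classical
  haveI : Nonempty (Fin N) := Fin.pos_iff_nonempty.mp hN
  have hs : (0:ℝ) < ∑ i, (γ i)⁻¹ :=
    Finset.sum_pos (fun i _ => inv_pos.mpr (hγ i)) Finset.univ_nonempty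
  set s : ℝ := ∑ i, (γ i)⁻¹ with hs_def
  set uh : H := s⁻¹ • ∑ i, (γ i)⁻¹ • u i with huh_def
  have hsu : s • uh = ∑ i, (γ i)⁻¹ • u i := by
    rw [huh_def, smul_smul, mul_inv_cancel₀ hs.ne', one_smul]
  set Qh : H → ℝ := fun v => (2 * s⁻¹)⁻¹ * ‖v - uh‖ ^ 2 with hQh_def
  set cst : ℝ := 2⁻¹ * ∑ i, (γ i)⁻¹ * ‖u i‖ ^ 2 - (2 * s⁻¹)⁻¹ * ‖uh‖ ^ 2 with hcst_def
  have hsplit : ∀ v : H, 2⁻¹ * ∑ i, (γ i)⁻¹ * ‖v - u i‖ ^ 2 = Qh v + cst := fun v =>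
    quad_split (fun i => (γ i)⁻¹) u s hs_def hs.ne' uh hsu v
  set i0 : Fin N := ⟨0, hN⟩ with hi0
  -- canonical form of the objective on consensus points
  have key : ∀ (x : PiLp 2 (fun _ : Fin N => H)) (v : H), (∀ i, x i = v) →
      ((((N : ℝ)⁻¹ : ℝ) : EReal) * (∑ i, g (x i)) +
        (if ∀ i j : Fin N, x i = x j then (0 : EReal) else ⊤))
        + ((2⁻¹ * ∑ i, (γ i)⁻¹ * ‖x i - u i‖ ^ 2 : ℝ) : EReal)
      = (g v + ((Qh v : ℝ) : EReal)) + ((cst : ℝ) : EReal) := by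
    intro x v hx
    rw [if_pos (fun i j => (hx i).trans (hx j).symm), add_zero]
    have h1 : ∑ i, g (x i) = ∑ _i : Fin N, g v :=
      Finset.sum_congr rfl fun i _ => by rw [hx i]
    have h2 : (2⁻¹ * ∑ i, (γ i)⁻¹ * ‖x i - u i‖ ^ 2 : ℝ) = Qh v + cst := by
      rw [show (∑ i, (γ i)⁻¹ * ‖x i - u i‖ ^ 2) = ∑ i, (γ i)⁻¹ * ‖v - u i‖ ^ 2 from
        Finset.sum_congr rfl fun i _ => by rw [hx i]]
      exact hsplit v
    rw [h1, ereal_const_avg N hN _ (hgbot v), h2, EReal.coe_add, ← add_assoc]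
  -- the objective is ⊤ off the consensus set
  have keyT : ∀ (x : PiLp 2 (fun _ : Fin N => H)), ¬ (∀ i j : Fin N, x i = x j) →
      ((((N : ℝ)⁻¹ : ℝ) : EReal) * (∑ i, g (x i)) +
        (if ∀ i j : Fin N, x i = x j then (0 : EReal) else ⊤))
        + ((2⁻¹ * ∑ i, (γ i)⁻¹ * ‖x i - u i‖ ^ 2 : ℝ) : EReal) = ⊤ := by
    intro x hx
    rw [if_neg hx]
    have hne : (((N : ℝ)⁻¹ : ℝ) : EReal) * (∑ i, g (x i)) ≠ ⊥ :=
      ereal_mul_ne_bot_of_pos (by positivity)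
        (ereal_sum_ne_bot _ _ (fun i => hgbot _))
    rw [EReal.add_top_of_ne_bot hne, EReal.top_add_of_ne_bot (EReal.coe_ne_bot _)]
  ext z
  simp only [proxSet, Set.mem_setOf_eq]
  constructor
  · intro hz
    obtain ⟨v₀, hv₀⟩ := hgproper
    have hcons : ∀ i j : Fin N, z i = z j := by
      by_contra hnc
      have hzw := hz (WithLp.toLp 2 (fun _ => v₀))
      rw [keyT z hnc, key (WithLp.toLp 2 (fun _ => v₀)) v₀ (fun _ => rfl)] at hzw
      have hlt : (g v₀ + ((Qh v₀ : ℝ) : EReal)) + ((cst : ℝ) : EReal) < ⊤ :=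
        EReal.add_lt_top (EReal.add_lt_top hv₀ (EReal.coe_ne_top _)).ne
          (EReal.coe_ne_top _)
      exact absurd (top_le_iff.mp hzw) hlt.ne
    refine ⟨z i0, ?_, fun i => hcons i i0⟩
    intro w
    have hzw := hz (WithLp.toLp 2 (fun _ => w))
    rw [key z (z i0) (fun i => hcons i i0), key (WithLp.toLp 2 (fun _ => w)) w (fun _ => rfl),
      ereal_cancel_coe] at hzw
    exact hzw
  · rintro ⟨v, hv, hzi⟩
    intro w
    rw [key z v hzi]
    by_cases hw : ∀ i j : Fin N, w i = w j
    · rw [key w (w i0) (fun i => hw i i0), ereal_cancel_coe]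
      exact hv (w i0)
    · rw [keyT w hw]
      exact le_top
end
end

section
/- Let f_i:ℝ^n→ℝ be differentiable, i=1,…,N, let g:ℝ^n→ℝ∪{∞} be proper, convex and lsc, let φ(x) = (1/N)∑_{i=1}^N f_i(x) + g(x) on ℝ^n, and let Φ(x_1,…,x_N) = (1/N)∑_{i=1}^N f_i(x_i) + (1/N)∑_{i=1}^N g(x_i) + δ_C(x_1,…,x_N) on ℝ^{Nn}, where C is the consensus set {x : x_1=⋯=x_N}. Then there exists a constant c>0 (independent of x, coming from the equivalence of the norms ‖w‖ and ∑_i‖w_i‖ on ℝ^{Nn}) such that dist(0, ∂Φ(x,…,x)) ≥ c·dist(0, ∂φ(x)) for every x∈ℝ^n, where ∂ denotes the limiting subdifferential. -/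
open Filter Topology Metric Bornology Set
open scoped RealInnerProductSpace

noncomputable section

variable {N : ℕ} {E : Fin N → Type*}
  [∀ i, NormedAddCommGroup (E i)] [∀ i, InnerProductSpace ℝ (E i)]

set_option linter.unusedSectionVars false
set_option maxHeartbeats 1000000

private def cmap {N : ℕ} {H : Type*} (x : H) : PiLp 2 (fun _ : Fin N => H) := WithLp.toLp 2 (fun _ => x)

section Aux

variable {N : ℕ} {H : Type*} [NormedAddCommGroup H] [InnerProductSpace ℝ H]

private lemma nsmul_top_eReal {n : ℕ} (hn : 0 < n) : n • (⊤ : EReal) = ⊤ := by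
  induction n with
  | zero => exact absurd hn (lt_irrefl 0)
  | succ k ih =>
    rcases Nat.eq_zero_or_pos k with h | h
    · subst h; simp
    · rw [succ_nsmul, ih h]; simp

private lemma inv_nsmul_cancel (hN : 0 < N) {s : EReal} (hs : s ≠ ⊥) :
    (((N : ℝ)⁻¹ : ℝ) : EReal) * (N • s) = s := by
  induction s with
  | bot => exact absurd rfl hs
  | coe r =>
    rw [← EReal.coe_nsmul, ← EReal.coe_mul]
    norm_cast
    field_simp
    exact nsmul_eq_mul N r
  | top =>
    rw [nsmul_top_eReal hN, EReal.coe_mul_top_of_pos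
      (inv_pos.mpr (by exact_mod_cast hN))]

private lemma cmap_sub (x y : H) :
    (cmap x - cmap y : PiLp 2 (fun _ : Fin N => H)) = cmap (x - y) := rfl

private lemma norm_cmap (a : H) :
    ‖(cmap a : PiLp 2 (fun _ : Fin N => H))‖ = Real.sqrt N * ‖a‖ := by
  rw [PiLp.norm_eq_of_L2]
  have : ∑ _i : Fin N, ‖a‖ ^ 2 = (N : ℝ) * ‖a‖ ^ 2 := by
    simp [Finset.sum_const, nsmul_eq_mul]
  rw [show ∑ i : Fin N, ‖(cmap a : PiLp 2 (fun _ : Fin N => H)) i‖ ^ 2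
      = (N : ℝ) * ‖a‖ ^ 2 from this,
    Real.sqrt_mul (by positivity), Real.sqrt_sq (norm_nonneg _)]

private lemma inner_cmap (v : PiLp 2 (fun _ : Fin N => H)) (a : H) :
    ⟪v, (cmap a : PiLp 2 (fun _ : Fin N => H))⟫ = ⟪∑ i, v i, a⟫ := by
  rw [PiLp.inner_apply, sum_inner]
  rfl

private lemma sum_norm_le (v : PiLp 2 (fun _ : Fin N => H)) :
    ‖∑ i, v i‖ ≤ Real.sqrt N * ‖v‖ := by
  refine (norm_sum_le _ _).trans ?_
  have h1 : (∑ i, ‖v i‖) ^ 2 ≤ (N : ℝ) * ∑ i, ‖v i‖ ^ 2 := by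
    simpa using sq_sum_le_card_mul_sum_sq (s := Finset.univ)
      (f := fun i => ‖v i‖)
  calc ∑ i, ‖v i‖ = Real.sqrt ((∑ i, ‖v i‖) ^ 2) :=
        (Real.sqrt_sq (by positivity)).symm
    _ ≤ Real.sqrt ((N : ℝ) * ∑ i, ‖v i‖ ^ 2) := Real.sqrt_le_sqrt h1
    _ = Real.sqrt N * ‖v‖ := by
        rw [Real.sqrt_mul (by positivity), PiLp.norm_eq_of_L2]

private lemma cmap_continuous :
    Continuous (cmap : H → PiLp 2 (fun _ : Fin N => H)) :=
  ((PiLp.continuousLinearEquiv 2 ℝ (fun _ : Fin N => H)).symm.continuous).comp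
    (continuous_pi fun _ => continuous_id)

private lemma eval_continuous (i : Fin N) :
    Continuous (fun w : PiLp 2 (fun _ : Fin N => H) => w i) :=
  (continuous_apply i).comp
    (PiLp.continuousLinearEquiv 2 ℝ (fun _ : Fin N => H)).continuous

private lemma sum_continuous :
    Continuous (fun w : PiLp 2 (fun _ : Fin N => H) => ∑ i, w i) :=
  continuous_finset_sum _ fun i _ => eval_continuous i

end Aux

open Classical in
/-- key inequality in Corollary 4.5: there is c > 0 such that
dist(0, ∂Φ(x,…,x)) ≥ c·dist(0, ∂φ(x)) for all x, where φ = (1/N)∑fᵢ + g on H and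
Φ = (1/N)∑fᵢ(xᵢ) + (1/N)∑g(xᵢ) + δ_C on the product space, ∂ the limiting subdifferential. -/
theorem consensus_subdifferential_distance_bound {N : ℕ} (hN : 0 < N)
    {H : Type*} [NormedAddCommGroup H] [InnerProductSpace ℝ H]
    (f : Fin N → H → ℝ) (hf : ∀ i, Differentiable ℝ (f i))
    (g : H → EReal) (hglsc : LowerSemicontinuous g)
    (hgproper : ∃ u, g u ≠ ⊤) (hgbot : ∀ u, g u ≠ ⊥)
    (hgconv : ERealConvex g) :
    ∃ c : ℝ, 0 < c ∧
      ∀ x : H,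
        c * Metric.infDist (0 : H)
            (limitingSubdiff (fun y : H => (((N : ℝ)⁻¹ * ∑ i, f i y : ℝ) : EReal) + g y) x)
          ≤ Metric.infDist (0 : PiLp 2 (fun _ : Fin N => H))
            (limitingSubdiff
              (fun w : PiLp 2 (fun _ : Fin N => H) =>
                (((N : ℝ)⁻¹ * ∑ i, f i (w i) : ℝ) : EReal)
                  + (((N : ℝ)⁻¹ : ℝ) : EReal) * (∑ i, g (w i))
                  + (if ∀ i j : Fin N, w i = w j then (0 : EReal) else ⊤))
              (WithLp.toLp 2 (fun _ => x))) := by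
  classical
  have hN' : (0 : ℝ) < N := by exact_mod_cast hN
  have hsqrt : (0 : ℝ) < Real.sqrt N := Real.sqrt_pos.mpr hN'
  set φ : H → EReal := fun y => (((N : ℝ)⁻¹ * ∑ i, f i y : ℝ) : EReal) + g y with hφdef
  set Φ : PiLp 2 (fun _ : Fin N => H) → EReal := fun w =>
      (((N : ℝ)⁻¹ * ∑ i, f i (w i) : ℝ) : EReal)
        + (((N : ℝ)⁻¹ : ℝ) : EReal) * (∑ i, g (w i))
        + (if ∀ i j : Fin N, w i = w j then (0 : EReal) else ⊤) with hΦdef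
  show ∃ c : ℝ, 0 < c ∧ ∀ x : H,
      c * Metric.infDist (0 : H) (limitingSubdiff φ x)
        ≤ Metric.infDist (0 : PiLp 2 (fun _ : Fin N => H)) (limitingSubdiff Φ (cmap x))
  set i₀ : Fin N := ⟨0, hN⟩ with hi₀
  -- sum of g values is never ⊥
  have hsumgbot : ∀ w : Fin N → H, (∑ i, g (w i)) ≠ ⊥ := by
    intro w
    have : ∀ s : Finset (Fin N), (∑ i ∈ s, g (w i)) ≠ ⊥ := by
      intro s
      induction s using Finset.induction with
      | empty => simp
      | insert _ _ h ih =>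
        rw [Finset.sum_insert h]
        exact fun hc => (EReal.add_eq_bot_iff.mp hc).elim (fun hb => hgbot _ hb) (fun hb => ih hb)
    exact this _
  -- Φ on consensus points equals φ
  have hPhiCons : ∀ y : H, Φ (cmap y) = φ y := by
    intro y
    have hcons : ∀ i j : Fin N, (cmap y : PiLp 2 (fun _ : Fin N => H)) i
        = (cmap y : PiLp 2 (fun _ : Fin N => H)) j := fun _ _ => rfl
    show _ + _ + _ = _
    rw [if_pos hcons, add_zero]
    have h1 : (∑ i : Fin N, g ((cmap y : PiLp 2 (fun _ : Fin N => H)) i)) = N • g y := by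
      simp [cmap, Finset.sum_const, Finset.card_univ]
    rw [h1, inv_nsmul_cancel hN (hgbot y)]
    rfl
  -- finiteness of Φ forces consensus
  have hPhiTop : ∀ w : PiLp 2 (fun _ : Fin N => H), Φ w ≠ ⊤ → ∀ i j : Fin N, w i = w j := by
    intro w hw
    by_contra hcon
    apply hw
    show _ + _ + _ = ⊤
    rw [if_neg hcon]
    apply EReal.add_top_of_ne_bot
    have hB2 : (((N : ℝ)⁻¹ : ℝ) : EReal) * (∑ i, g (w i)) ≠ ⊥ := by
      cases hs : (∑ i, g (w i)) with
      | bot => exact absurd hs (hsumgbot _)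
      | coe r => rw [← EReal.coe_mul]; exact EReal.coe_ne_bot _
      | top =>
        rw [EReal.coe_mul_top_of_pos (inv_pos.mpr hN')]
        simp
    exact fun hc => (EReal.add_eq_bot_iff.mp hc).elim
      (fun hb => EReal.coe_ne_bot _ hb) (fun hb => hB2 hb)
  -- Fréchet transfer, downwards
  have down : ∀ (y : H) (v : PiLp 2 (fun _ : Fin N => H)),
      v ∈ frechetSubdiff Φ (cmap y) → (∑ i, v i) ∈ frechetSubdiff φ y := by
    rintro y v ⟨hT, hB, hv⟩
    rw [hPhiCons y] at hT hB
    refine ⟨hT, hB, ?_⟩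
    intro ε hε
    have h1 := hv (ε / Real.sqrt N) (by positivity)
    have h2 := (cmap_continuous (N := N) (H := H)).continuousAt (x := y) |>.eventually h1
    filter_upwards [h2] with z hz
    rw [hPhiCons y, hPhiCons z, cmap_sub, inner_cmap, norm_cmap] at hz
    have : ε / Real.sqrt N * (Real.sqrt N * ‖z - y‖) = ε * ‖z - y‖ := by
      rw [div_mul_eq_mul_div, mul_div_assoc, mul_comm (Real.sqrt N) ‖z - y‖,
        mul_div_assoc, div_self (ne_of_gt hsqrt), mul_one]
    rwa [this] at hz
  -- limiting transfer, downwards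
  have down_lim : ∀ (x : H) (v : PiLp 2 (fun _ : Fin N => H)),
      v ∈ limitingSubdiff Φ (cmap x) → (∑ i, v i) ∈ limitingSubdiff φ x := by
    rintro x v ⟨u, w, hfre, hu, hval, hw⟩
    have hueq : ∀ k, u k = cmap (u k i₀) := by
      intro k
      ext i
      exact hPhiTop (u k) (hfre k).1 i i₀
    refine ⟨fun k => u k i₀, fun k => ∑ i, w k i, ?_, ?_, ?_, ?_⟩
    · intro k
      apply down
      rw [← hueq k]
      exact hfre k
    · have := ((eval_continuous (N := N) (H := H) i₀).tendsto (cmap x)).comp hu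
      exact this
    · have heq : ∀ k, Φ (u k) = φ (u k i₀) := by
        intro k
        have h := hPhiCons (u k i₀)
        rw [← hueq k] at h
        exact h
      rw [show φ x = Φ (cmap x) from (hPhiCons x).symm,
        show (fun k => φ (u k i₀)) = fun k => Φ (u k) from funext fun k => (heq k).symm]
      exact hval
    · exact ((sum_continuous (N := N) (H := H)).tendsto v).comp hw
  -- Fréchet transfer, upwards
  have up : ∀ (y s : H), s ∈ frechetSubdiff φ y →
      (cmap ((N : ℝ)⁻¹ • s)) ∈ frechetSubdiff Φ (cmap y) := by
    rintro y s ⟨hT, hB, hs⟩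
    refine ⟨by rw [hPhiCons]; exact hT, by rw [hPhiCons]; exact hB, ?_⟩
    intro ε hε
    have h1 := hs ε hε
    have h2 := ((eval_continuous (N := N) (H := H) i₀).tendsto (cmap y)).eventually h1
    filter_upwards [h2] with w hw
    by_cases hcons : ∀ i j : Fin N, w i = w j
    · have hwe : w = cmap (w i₀) := PiLp.ext fun i => hcons i i₀
      rw [hwe, hPhiCons, hPhiCons, cmap_sub, inner_cmap, norm_cmap]
      have hinner : ∑ i : Fin N, (cmap ((N : ℝ)⁻¹ • s) : PiLp 2 (fun _ : Fin N => H)) i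
          = s := by
        simp only [cmap]
        rw [Finset.sum_const, Finset.card_univ, Fintype.card_fin,
          ← Nat.cast_smul_eq_nsmul ℝ, smul_smul,
          mul_inv_cancel₀ (ne_of_gt hN'), one_smul]
      rw [hinner]
      refine le_trans (add_le_add_right (EReal.coe_le_coe_iff.mpr ?_) _) hw
      have h1N : (1 : ℝ) ≤ Real.sqrt N := by
        rw [show (1 : ℝ) = Real.sqrt 1 from (Real.sqrt_one).symm]
        exact Real.sqrt_le_sqrt (by exact_mod_cast hN)
      have hn1 : ‖w i₀ - y‖ ≤ Real.sqrt N * ‖w i₀ - y‖ :=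
        le_mul_of_one_le_left (norm_nonneg _) h1N
      have : ε * ‖w i₀ - y‖ ≤ ε * (Real.sqrt N * ‖w i₀ - y‖) :=
        mul_le_mul_of_nonneg_left hn1 hε.le
      linarith
    · have : Φ w = ⊤ := by
        by_contra h
        exact hcons (hPhiTop w h)
      rw [this]
      exact le_top
  -- limiting transfer, upwards
  have up_lim : ∀ (x s : H), s ∈ limitingSubdiff φ x →
      (cmap ((N : ℝ)⁻¹ • s)) ∈ limitingSubdiff Φ (cmap x) := by
    rintro x s ⟨y, t, hfre, hy, hval, ht⟩
    refine ⟨fun k => cmap (y k), fun k => cmap ((N : ℝ)⁻¹ • t k), fun k => up _ _ (hfre k),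
      ((cmap_continuous (N := N) (H := H)).tendsto x).comp hy, ?_, ?_⟩
    · have heq : (fun k => Φ (cmap (y k))) = fun k => φ (y k) := by
        funext k; rw [hPhiCons]
      rw [heq, hPhiCons]
      exact hval
    · have : Continuous (fun a : H => (cmap ((N : ℝ)⁻¹ • a) : PiLp 2 (fun _ : Fin N => H))) :=
        (cmap_continuous (N := N) (H := H)).comp (continuous_const_smul _)
      exact (this.tendsto s).comp ht
  -- assemble
  refine ⟨(Real.sqrt N)⁻¹, inv_pos.mpr hsqrt, ?_⟩
  intro x
  by_cases hne : (limitingSubdiff Φ (cmap x)).Nonempty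
  · have key : ∀ v ∈ limitingSubdiff Φ (cmap x),
        (Real.sqrt N)⁻¹ * Metric.infDist (0 : H) (limitingSubdiff φ x) ≤ dist 0 v := by
      intro v hv
      have hm := down_lim x v hv
      have h1 : Metric.infDist (0 : H) (limitingSubdiff φ x) ≤ ‖∑ i, v i‖ := by
        have := Metric.infDist_le_dist_of_mem (x := (0 : H)) hm
        rwa [dist_zero_left] at this
      have h2 : Metric.infDist (0 : H) (limitingSubdiff φ x) ≤ Real.sqrt N * ‖v‖ :=
        h1.trans (sum_norm_le v)
      rw [dist_zero_left]
      calc (Real.sqrt N)⁻¹ * Metric.infDist (0 : H) (limitingSubdiff φ x)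
          ≤ (Real.sqrt N)⁻¹ * (Real.sqrt N * ‖v‖) :=
            mul_le_mul_of_nonneg_left h2 (by positivity)
        _ = ‖v‖ := by field_simp
    by_contra hlt
    push_neg at hlt
    obtain ⟨v, hv, hd⟩ := (Metric.infDist_lt_iff hne).mp hlt
    exact absurd hd (not_lt.mpr (key v hv))
  · rw [Set.not_nonempty_iff_eq_empty] at hne
    have hφe : limitingSubdiff φ x = ∅ := by
      rw [Set.eq_empty_iff_forall_notMem]
      intro s hs
      have := up_lim x s hs
      rw [hne] at this
      exact this
    rw [hφe, hne]
    simp [Metric.infDist_empty]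
end
end
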